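/- Let a ∈ ℂ with 0 < |a| < 1, and let z = e^{iθ} with α ≤ θ ≤ 2π - α where cos(α/2) = √(1-|a|²), α ∈ (0,π). Then both roots z₁, z₂ of λ² - (z+1)λ + z(1-|a|²) = 0 satisfy |z₁| = |z₂| = √(1-|a|²). -/

import Mathlib

open Complex

theorem stmt5 (a : ℂ) (ha : 0 < ‖a‖) (ha1 : ‖a‖ < 1)
    (α : ℝ) (hα : α ∈ Set.Ioo 0 Real.pi)
    (hcos : Real.cos (α / 2) = Real.sqrt (1 - ‖a‖ ^ 2))
    (θ : ℝ) (hθ : α ≤ θ ∧ θ ≤ 2 * Real.pi - α)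
    (z : ℂ) (hz : z = Complex.exp (Complex.I * θ))
    (z₁ : ℂ) (hroot : z₁ ^ 2 - (z + 1) * z₁ + z * (1 - (‖a‖ : ℂ) ^ 2) = 0) :
    ‖z₁‖ = Real.sqrt (1 - ‖a‖ ^ 2) := by
  obtain ⟨hα0, hαπ⟩ := hα
  obtain ⟨hθ1, hθ2⟩ := hθ
  have hπ := Real.pi_pos
  set r2 : ℝ := 1 - ‖a‖ ^ 2 with hr2
  have hr2pos : 0 < r2 := by nlinarith
  set c : ℝ := Real.cos (θ / 2) with hc
  have hc2 : c ^ 2 ≤ r2 := by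
    have h1 : Real.cos (θ / 2) ≤ Real.cos (α / 2) :=
      Real.cos_le_cos_of_nonneg_of_le_pi (by linarith) (by linarith) (by linarith)
    have h2 : Real.cos (Real.pi - α / 2) ≤ Real.cos (θ / 2) :=
      Real.cos_le_cos_of_nonneg_of_le_pi (by linarith) (by linarith) (by linarith)
    rw [Real.cos_pi_sub] at h2
    have h3 := sq_le_sq' h2 h1
    rw [hcos, Real.sq_sqrt hr2pos.le] at h3
    exact h3
  set w : ℂ := Complex.exp (Complex.I * ((θ / 2 : ℝ) : ℂ)) with hw
  have hwne : w ≠ 0 := Complex.exp_ne_zero _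
  have hw2 : w * w = z := by
    rw [hw, hz, ← Complex.exp_add]
    congr 1
    push_cast
    ring
  have hwnorm : ‖w‖ = 1 := by
    rw [hw, mul_comm, Complex.norm_exp_ofReal_mul_I]
  have hz1 : z + 1 = 2 * (c : ℂ) * w := by
    have hcc : (c : ℂ) = (Complex.exp (Complex.I * ((θ / 2 : ℝ) : ℂ)) +
        Complex.exp (-(Complex.I * ((θ / 2 : ℝ) : ℂ)))) / 2 := by
      rw [hc, Complex.ofReal_cos, Complex.cos]
      ring_nf
    have hinv : Complex.exp (-(Complex.I * ((θ / 2 : ℝ) : ℂ))) * w = 1 := by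
      rw [hw, ← Complex.exp_add]
      simp
    linear_combination (-2 * w) * hcc - hw2 - hinv
  set μ : ℂ := z₁ / w with hμ
  have hzμ : z₁ = μ * w := by rw [hμ, div_mul_cancel₀ z₁ hwne]
  have hμeq : μ ^ 2 - 2 * (c : ℂ) * μ + (r2 : ℂ) = 0 := by
    have hr2c : ((r2 : ℝ) : ℂ) = 1 - (‖a‖ : ℂ) ^ 2 := by push_cast [hr2]; ring
    have h2 : (μ ^ 2 - 2 * (c : ℂ) * μ + (r2 : ℂ)) * (w * w) = 0 := by
      rw [hr2c]
      linear_combination hroot + z₁ * hz1 + (2 * (c : ℂ) * w - z₁ - μ * w) * hzμ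
        + (1 - (‖a‖ : ℂ) ^ 2) * hw2
    rcases mul_eq_zero.mp h2 with h | h
    · exact h
    · exact absurd h (by simp [hwne])
  -- real/imaginary parts
  set x : ℝ := μ.re with hx
  set y : ℝ := μ.im with hy
  have hre : x ^ 2 - y ^ 2 - 2 * c * x + r2 = 0 := by
    have := congrArg Complex.re hμeq
    simpa [pow_two, Complex.add_re, Complex.sub_re, Complex.mul_re, ← hx, ← hy] using this
  have him : 2 * (x - c) * y = 0 := by
    have := congrArg Complex.im hμeq
    simp [pow_two, Complex.add_im, Complex.sub_im, Complex.mul_im, ← hx, ← hy] at this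
    linarith [this]
  have hsum : x ^ 2 + y ^ 2 = r2 := by
    rcases mul_eq_zero.mp him with h | h
    · have hxc : x = c := by
        rcases mul_eq_zero.mp h with h' | h'
        · norm_num at h'
        · linarith
      rw [hxc] at hre ⊢
      linear_combination (-1 : ℝ) * hre
    · have hre' : x ^ 2 - 2 * c * x + r2 = 0 := by
        have hy0 : y ^ 2 = 0 := by rw [h]; ring
        linarith [hre, hy0]
      have hcr : c ^ 2 = r2 := le_antisymm hc2 (by nlinarith [sq_nonneg (x - c)])
      have hx0 : (x - c) ^ 2 = 0 := by linear_combination hre' + hcr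
      have hxc' : x = c := sub_eq_zero.mp (pow_eq_zero_iff (two_ne_zero) |>.mp hx0)
      rw [hxc', h]
      linear_combination hcr
  have hnμ : ‖μ‖ = Real.sqrt r2 := by
    rw [Complex.norm_def, Complex.normSq_apply, ← hx, ← hy]
    rw [show x * x + y * y = r2 by nlinarith]
  rw [hzμ, norm_mul, hwnorm, mul_one, hnμ]
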